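/- Let z, w, f, g ∈ ℝ^m with f ≥ 0 and g ≥ 0 entrywise, and let X ∈ ℝ^{m×m} have zero diagonal and nonpositive off-diagonal entries. Suppose w(z-w)ᵀ = 𝟙fᵀ + g𝟙ᵀ + X. Then for any indices i ≠ j with z_i = z_j, it holds that w_i = w_j. -/
import Mathlib


open Matrix

/-- Equal `z`-components force equal `w`-components under the dual decomposition. -/
theorem stmt_6 {m : ℕ} (z w f g : Fin m → ℝ)
    (hf : ∀ i, 0 ≤ f i) (hg : ∀ i, 0 ≤ g i)
    (X : Matrix (Fin m) (Fin m) ℝ)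
    (hXd : ∀ i, X i i = 0) (hXod : ∀ i j, i ≠ j → X i j ≤ 0)
    (heq : vecMulVec w (z - w) =
      vecMulVec (fun _ => (1 : ℝ)) f + vecMulVec g (fun _ => (1 : ℝ)) + X)
    (i j : Fin m) (hij : i ≠ j) (hz : z i = z j) :
    w i = w j := by
  have h : ∀ a b : Fin m, w a * (z b - w b) = f b + g a + X a b := by
    intro a b
    have := congrFun (congrFun heq a) b
    simpa [vecMulVec_apply, Matrix.add_apply] using this
  have h1 := h i i
  have h2 := h i j
  have h3 := h j i
  have h4 := h j j
  have hx1 := hXod i j hij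
  have hx2 := hXod j i hij.symm
  rw [hXd] at h1 h4
  nlinarith [sq_nonneg (w i - w j)]
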